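/- Let D be a finite multiset of tuples, A : tuple → V an attribute map, and let B_1,…,B_m be pairwise disjoint sets covering V (the histogram bins). Suppose c⁺_i ≥ |{t ∈ D : A(t) ∈ B_i}| (counted with multiplicity) for each i. Then for every set vals ⊆ V, |{t ∈ D : A(t) ∈ vals}| ≤ min(|D|, ∑_{i : B_i ∩ vals ≠ ∅} c⁺_i). -/

import Mathlib

open scoped Classical

/-- **Soundness of SPECIAL's cardinality estimator for selections.**
If `c⁺ i` overestimates the number of tuples of `D` whose `A`-value lies in
bin `B i` (bins pairwise disjoint and covering `V`), then for every selection
`vals ⊆ V` the true selection cardinality is at most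
`min (|D|, ∑_{i : B i ∩ vals ≠ ∅} c⁺ i)`. -/
theorem cardEst_sound
    {τ V : Type*} (D : Multiset τ) (A : τ → V)
    (m : ℕ) (B : Fin m → Set V)
    (hdisj : ∀ i j, i ≠ j → Disjoint (B i) (B j))
    (hcover : (⋃ i, B i) = Set.univ)
    (cp : Fin m → ℕ)
    (hcp : ∀ i, (D.filter (fun t => A t ∈ B i)).card ≤ cp i) :
    ∀ vals : Set V,
      (D.filter (fun t => A t ∈ vals)).card ≤
        min D.card (∑ i ∈ Finset.univ.filter (fun i => (B i ∩ vals).Nonempty), cp i) := by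
  intro vals
  refine le_min (le_trans (Multiset.card_le_card (Multiset.filter_le _ _)) le_rfl) ?_
  set S := Finset.univ.filter (fun i => (B i ∩ vals).Nonempty) with hS
  have key : ∀ E : Multiset τ,
      (E.filter (fun t => A t ∈ vals)).card ≤
        ∑ i ∈ S, (E.filter (fun t => A t ∈ B i)).card := by
    intro E
    induction E using Multiset.induction with
    | empty => simp
    | cons a s ih =>
      by_cases ha : A a ∈ vals
      · have hmem : A a ∈ ⋃ i, B i := by rw [hcover]; trivial
        obtain ⟨_, ⟨i, rfl⟩, hi⟩ := hmem
        have hiS : i ∈ S := by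
          simp [hS, Set.Nonempty]
          exact ⟨A a, hi, ha⟩
        have : ∑ j ∈ S, ((s.filter (fun t => A t ∈ B j)).card) + 1 ≤
            ∑ j ∈ S, ((a ::ₘ s).filter (fun t => A t ∈ B j)).card := by
          have := Finset.sum_le_sum (f := fun j => (s.filter (fun t => A t ∈ B j)).card +
              if j = i then 1 else 0)
            (g := fun j => ((a ::ₘ s).filter (fun t => A t ∈ B j)).card)
            (s := S) ?_
          · calc ∑ j ∈ S, (s.filter (fun t => A t ∈ B j)).card + 1
                = ∑ j ∈ S, ((s.filter (fun t => A t ∈ B j)).card + if j = i then 1 else 0) := by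
                  rw [Finset.sum_add_distrib, Finset.sum_ite_eq' S i (fun _ => 1), if_pos hiS]
              _ ≤ _ := this
          · intro j hj
            rw [Multiset.filter_cons]
            by_cases hji : j = i
            · subst hji
              simp [hi]
            · simp only [hji, if_false, add_zero]
              split <;> simp
        calc ((a ::ₘ s).filter (fun t => A t ∈ vals)).card
            = (s.filter (fun t => A t ∈ vals)).card + 1 := by
              rw [Multiset.filter_cons, if_pos ha]; simp [add_comm]
          _ ≤ ∑ j ∈ S, (s.filter (fun t => A t ∈ B j)).card + 1 := by omega
          _ ≤ _ := this
      · rw [Multiset.filter_cons, if_neg ha]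
        simp only [zero_add]
        refine le_trans ih (Finset.sum_le_sum fun j hj => ?_)
        exact Multiset.card_le_card (Multiset.filter_le_filter _ (Multiset.le_cons_self _ _))
  exact le_trans (key D) (Finset.sum_le_sum fun i _ => hcp i)
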